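/- The helicity ±2 polarization sum for a spin-2 field is given by transverse projectors: for all indices i, j, m, n, ∑_{h ∈ {+2,−2}} e^{(h)}ᵢⱼ(k̂) · e^{(h)}ₘₙ(−k̂) = πᵢₘ·πⱼₙ + πᵢₙ·πⱼₘ − πᵢⱼ·πₘₙ, where πᵢⱼ = δᵢⱼ − k̂ᵢk̂ⱼ. -/

import Mathlib

open Complex

/-- Dot product on `ℝ³` realized as `Fin 3 → ℝ`. -/
noncomputable def dotR (u v : Fin 3 → ℝ) : ℝ := ∑ i, u i * v i

/-- The complex polarization vectors
`ê^±(k̂)ᵢ = (n̂ᵢ − (n̂·k̂)k̂ᵢ ± i(k̂×n̂)ᵢ)/√(2(1 − (n̂·k̂)²))`,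
with the sign `s = ±1` labelling the helicity. -/
noncomputable def polVec (n k : Fin 3 → ℝ) (s : ℝ) : Fin 3 → ℂ := fun i =>
  (((n i - dotR n k * k i : ℝ) : ℂ) +
      (s : ℂ) * Complex.I * (((crossProduct k n) i : ℝ) : ℂ)) /
    ((Real.sqrt (2 * (1 - (dotR n k) ^ 2)) : ℝ) : ℂ)

/-- The spin-2 polarization tensors:
`e⁽⁰⁾ᵢⱼ = √3(k̂ᵢk̂ⱼ − δᵢⱼ/3)`, `e⁽±¹⁾ᵢⱼ = i(k̂ᵢ·ê^±ⱼ + k̂ⱼ·ê^±ᵢ)`,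
`e⁽±²⁾ᵢⱼ = √2·ê^±ᵢ·ê^±ⱼ`, labelled by the helicity `h ∈ {−2,−1,0,1,2} ⊆ ℤ`. -/
noncomputable def polTen2 (n k : Fin 3 → ℝ) (h : ℤ) : Fin 3 → Fin 3 → ℂ :=
  if h = 0 then
    fun i j => ((Real.sqrt 3 : ℝ) : ℂ) *
      (((k i : ℝ) : ℂ) * ((k j : ℝ) : ℂ) - if i = j then (1 : ℂ)/3 else 0)
  else if h = 1 then
    fun i j => Complex.I *
      (((k i : ℝ) : ℂ) * polVec n k 1 j + ((k j : ℝ) : ℂ) * polVec n k 1 i)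
  else if h = -1 then
    fun i j => Complex.I *
      (((k i : ℝ) : ℂ) * polVec n k (-1) j + ((k j : ℝ) : ℂ) * polVec n k (-1) i)
  else if h = 2 then
    fun i j => ((Real.sqrt 2 : ℝ) : ℂ) * polVec n k 1 i * polVec n k 1 j
  else if h = -2 then
    fun i j => ((Real.sqrt 2 : ℝ) : ℂ) * polVec n k (-1) i * polVec n k (-1) j
  else 0

/-- The transverse projector `πᵢⱼ = δᵢⱼ − k̂ᵢk̂ⱼ`. -/
noncomputable def projT (k : Fin 3 → ℝ) (i j : Fin 3) : ℝ :=
  (if i = j then 1 else 0) - k i * k j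

/-- The matrix `ε_{imp} k_p`. -/
noncomputable def epsK (k : Fin 3 → ℝ) : Fin 3 → Fin 3 → ℝ :=
  ![![0, k 2, -(k 1)], ![-(k 2), 0, k 0], ![k 1, -(k 0), 0]]

lemma L1 (n k : Fin 3 → ℝ)
    (hk : k 0 * k 0 + k 1 * k 1 + k 2 * k 2 = 1)
    (hn : n 0 * n 0 + n 1 * n 1 + n 2 * n 2 = 1) (i j : Fin 3) :
    (n i - dotR n k * k i) * (n j - dotR n k * k j) +
      (crossProduct k n) i * (crossProduct k n) j =
      (1 - dotR n k ^ 2) * projT k i j := by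
  have hd : dotR n k = n 0 * k 0 + n 1 * k 1 + n 2 * k 2 := by
    simp [dotR, Fin.sum_univ_three]
  fin_cases i <;> fin_cases j <;>
    simp only [hd, Fin.zero_eta, Fin.mk_one, Fin.reduceFinMk, cross_apply, projT, epsK,
      Matrix.cons_val_zero, Matrix.cons_val_one, Matrix.head_cons,
      Matrix.cons_val_two, Matrix.tail_cons, Fin.reduceEq, reduceIte]
  · linear_combination ((1) - n 0^2) * hk + (k 2^2 + k 1^2) * hn
  · linear_combination (-n 0*n 1) * hk + (-k 0*k 1) * hn
  · linear_combination (-n 0*n 2) * hk + (-k 0*k 2) * hn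
  · linear_combination (-n 0*n 1) * hk + (-k 0*k 1) * hn
  · linear_combination (n 2^2 + n 0^2) * hk + ((1) - k 1^2) * hn
  · linear_combination (-n 1*n 2) * hk + (-k 1*k 2) * hn
  · linear_combination (-n 0*n 2) * hk + (-k 0*k 2) * hn
  · linear_combination (-n 1*n 2) * hk + (-k 1*k 2) * hn
  · linear_combination (n 1^2 + n 0^2) * hk + ((1) - k 2^2) * hn

lemma L2a (n k : Fin 3 → ℝ)
    (hk : k 0 * k 0 + k 1 * k 1 + k 2 * k 2 = 1)
    (hn : n 0 * n 0 + n 1 * n 1 + n 2 * n 2 = 1) (i m : Fin 3) :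
    (crossProduct k n) i * (n m - dotR n k * k m) -
      (n i - dotR n k * k i) * (crossProduct k n) m =
      -(1 - dotR n k ^ 2) * epsK k i m := by
  have hd : dotR n k = n 0 * k 0 + n 1 * k 1 + n 2 * k 2 := by
    simp [dotR, Fin.sum_univ_three]
  fin_cases i <;> fin_cases m <;>
    simp only [hd, Fin.zero_eta, Fin.mk_one, Fin.reduceFinMk, cross_apply, projT, epsK,
      Matrix.cons_val_zero, Matrix.cons_val_one, Matrix.head_cons,
      Matrix.cons_val_two, Matrix.tail_cons, Fin.reduceEq, reduceIte]
  · linear_combination (0:ℝ) * hk + (0:ℝ) * hn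
  · linear_combination (-k 2*n 2^2 - k 1*n 1*n 2 - k 0*n 0*n 2) * hk + (-k 2) * hn
  · linear_combination (k 2*n 1*n 2 + k 1*n 1^2 + k 0*n 0*n 1) * hk + (k 1) * hn
  · linear_combination (k 2*n 2^2 + k 1*n 1*n 2 + k 0*n 0*n 2) * hk + (k 2) * hn
  · linear_combination (0:ℝ) * hk + (0:ℝ) * hn
  · linear_combination (-k 2*n 0*n 2 - k 1*n 0*n 1 - k 0*n 0^2) * hk + (-k 0) * hn
  · linear_combination (-k 2*n 1*n 2 - k 1*n 1^2 - k 0*n 0*n 1) * hk + (-k 1) * hn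
  · linear_combination (k 2*n 0*n 2 + k 1*n 0*n 1 + k 0*n 0^2) * hk + (k 0) * hn
  · linear_combination (0:ℝ) * hk + (0:ℝ) * hn

lemma L2b (k : Fin 3 → ℝ)
    (hk : k 0 * k 0 + k 1 * k 1 + k 2 * k 2 = 1) (i m j m' : Fin 3) :
    epsK k i m * epsK k j m' =
      projT k i j * projT k m m' - projT k i m' * projT k j m := by
  fin_cases i <;> fin_cases m <;> fin_cases j <;> fin_cases m' <;>
    simp only [Fin.zero_eta, Fin.mk_one, Fin.reduceFinMk, projT, epsK,
      Matrix.cons_val_zero, Matrix.cons_val_one, Matrix.head_cons,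
      Matrix.cons_val_two, Matrix.tail_cons, Fin.reduceEq, reduceIte]
  · linear_combination (0:ℝ) * hk
  · linear_combination (0:ℝ) * hk
  · linear_combination (0:ℝ) * hk
  · linear_combination (0:ℝ) * hk
  · linear_combination (0:ℝ) * hk
  · linear_combination (0:ℝ) * hk
  · linear_combination (0:ℝ) * hk
  · linear_combination (0:ℝ) * hk
  · linear_combination (0:ℝ) * hk
  · linear_combination (0:ℝ) * hk
  · linear_combination ((1)) * hk
  · linear_combination (0:ℝ) * hk
  · linear_combination ((-1)) * hk
  · linear_combination (0:ℝ) * hk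
  · linear_combination (0:ℝ) * hk
  · linear_combination (0:ℝ) * hk
  · linear_combination (0:ℝ) * hk
  · linear_combination (0:ℝ) * hk
  · linear_combination (0:ℝ) * hk
  · linear_combination (0:ℝ) * hk
  · linear_combination ((1)) * hk
  · linear_combination (0:ℝ) * hk
  · linear_combination (0:ℝ) * hk
  · linear_combination (0:ℝ) * hk
  · linear_combination ((-1)) * hk
  · linear_combination (0:ℝ) * hk
  · linear_combination (0:ℝ) * hk
  · linear_combination (0:ℝ) * hk
  · linear_combination ((-1)) * hk
  · linear_combination (0:ℝ) * hk
  · linear_combination ((1)) * hk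
  · linear_combination (0:ℝ) * hk
  · linear_combination (0:ℝ) * hk
  · linear_combination (0:ℝ) * hk
  · linear_combination (0:ℝ) * hk
  · linear_combination (0:ℝ) * hk
  · linear_combination (0:ℝ) * hk
  · linear_combination (0:ℝ) * hk
  · linear_combination (0:ℝ) * hk
  · linear_combination (0:ℝ) * hk
  · linear_combination (0:ℝ) * hk
  · linear_combination (0:ℝ) * hk
  · linear_combination (0:ℝ) * hk
  · linear_combination (0:ℝ) * hk
  · linear_combination (0:ℝ) * hk
  · linear_combination (0:ℝ) * hk
  · linear_combination (0:ℝ) * hk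
  · linear_combination (0:ℝ) * hk
  · linear_combination (0:ℝ) * hk
  · linear_combination (0:ℝ) * hk
  · linear_combination ((1)) * hk
  · linear_combination (0:ℝ) * hk
  · linear_combination ((-1)) * hk
  · linear_combination (0:ℝ) * hk
  · linear_combination (0:ℝ) * hk
  · linear_combination (0:ℝ) * hk
  · linear_combination ((-1)) * hk
  · linear_combination (0:ℝ) * hk
  · linear_combination (0:ℝ) * hk
  · linear_combination (0:ℝ) * hk
  · linear_combination ((1)) * hk
  · linear_combination (0:ℝ) * hk
  · linear_combination (0:ℝ) * hk
  · linear_combination (0:ℝ) * hk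
  · linear_combination (0:ℝ) * hk
  · linear_combination (0:ℝ) * hk
  · linear_combination (0:ℝ) * hk
  · linear_combination (0:ℝ) * hk
  · linear_combination ((-1)) * hk
  · linear_combination (0:ℝ) * hk
  · linear_combination ((1)) * hk
  · linear_combination (0:ℝ) * hk
  · linear_combination (0:ℝ) * hk
  · linear_combination (0:ℝ) * hk
  · linear_combination (0:ℝ) * hk
  · linear_combination (0:ℝ) * hk
  · linear_combination (0:ℝ) * hk
  · linear_combination (0:ℝ) * hk
  · linear_combination (0:ℝ) * hk
  · linear_combination (0:ℝ) * hk
  · linear_combination (0:ℝ) * hk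

lemma keyLemma (p1 q1 p2 q2 p3 q3 p4 q4 : ℝ) :
    (((p1 : ℝ) : ℂ) + Complex.I * ((q1 : ℝ) : ℂ)) *
        (((p2 : ℝ) : ℂ) + Complex.I * ((q2 : ℝ) : ℂ)) *
        (((p3 : ℝ) : ℂ) - Complex.I * ((q3 : ℝ) : ℂ)) *
        (((p4 : ℝ) : ℂ) - Complex.I * ((q4 : ℝ) : ℂ)) +
      (((p1 : ℝ) : ℂ) - Complex.I * ((q1 : ℝ) : ℂ)) *
        (((p2 : ℝ) : ℂ) - Complex.I * ((q2 : ℝ) : ℂ)) *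
        (((p3 : ℝ) : ℂ) + Complex.I * ((q3 : ℝ) : ℂ)) *
        (((p4 : ℝ) : ℂ) + Complex.I * ((q4 : ℝ) : ℂ)) =
      ((2 * ((p1 * p3 + q1 * q3) * (p2 * p4 + q2 * q4) -
          (q1 * p3 - p1 * q3) * (q2 * p4 - p2 * q4)) : ℝ) : ℂ) := by
  push_cast
  linear_combination ((-2) * (q1:ℂ) * (q2:ℂ) * (q3:ℂ) * (q4:ℂ) + (2) * (q1:ℂ) * (q2:ℂ) * (p3:ℂ) * (p4:ℂ) + (-2) * (q1:ℂ) * (p2:ℂ) * (q3:ℂ) * (p4:ℂ) + (-2) * (q1:ℂ) * (p2:ℂ) * (p3:ℂ) * (q4:ℂ) + (-2) * (p1:ℂ) * (q2:ℂ) * (q3:ℂ) * (p4:ℂ) + (-2) * (p1:ℂ) * (q2:ℂ) * (p3:ℂ) * (q4:ℂ) + (2) * (p1:ℂ) * (p2:ℂ) * (q3:ℂ) * (q4:ℂ) + (2) * Complex.I ^ 2 * (q1:ℂ) * (q2:ℂ) * (q3:ℂ) * (q4:ℂ)) * Complex.I_sq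

lemma expandAux (s' S' u v w x : ℂ) (hS : S' ≠ 0) :
    (s' * (u / S') * (v / S')) * (s' * (w / S') * (x / S')) =
      s' * s' * (u * v * w * x) / S' ^ 4 := by
  field_simp

/-- The helicity `±2` polarization sum for a spin-2 field:
`∑_{h∈{+2,−2}} e^{(h)}ᵢⱼ(k̂)·e^{(h)}ₘₙ(−k̂) = πᵢₘπⱼₙ + πᵢₙπⱼₘ − πᵢⱼπₘₙ`. -/
theorem polTen2_sum_helicity_two (n k : Fin 3 → ℝ)
    (hk : dotR k k = 1) (hn : dotR n n = 1) (hkn : (dotR n k) ^ 2 ≠ 1)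
    (i j m m' : Fin 3) :
    polTen2 n k 2 i j * polTen2 n (fun l => -k l) 2 m m' +
      polTen2 n k (-2) i j * polTen2 n (fun l => -k l) (-2) m m' =
      ((projT k i m * projT k j m' + projT k i m' * projT k j m -
          projT k i j * projT k m m' : ℝ) : ℂ) := by
  have hk' : k 0 * k 0 + k 1 * k 1 + k 2 * k 2 = 1 := by
    simpa [dotR, Fin.sum_univ_three] using hk
  have hn' : n 0 * n 0 + n 1 * n 1 + n 2 * n 2 = 1 := by
    simpa [dotR, Fin.sum_univ_three] using hn
  have hd : dotR n k = n 0 * k 0 + n 1 * k 1 + n 2 * k 2 := by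
    simp [dotR, Fin.sum_univ_three]
  have hle : dotR n k ^ 2 ≤ 1 := by
    rw [hd]
    nlinarith [sq_nonneg (n 0 * k 1 - n 1 * k 0), sq_nonneg (n 0 * k 2 - n 2 * k 0),
      sq_nonneg (n 1 * k 2 - n 2 * k 1), hk', hn']
  have hpos : 0 < 1 - dotR n k ^ 2 := by
    rcases hle.lt_or_eq with h | h
    · linarith
    · exact absurd h hkn
  have hSpos : 0 < Real.sqrt (2 * (1 - dotR n k ^ 2)) := Real.sqrt_pos.mpr (by linarith)
  have hSne : Real.sqrt (2 * (1 - dotR n k ^ 2)) ≠ 0 := ne_of_gt hSpos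
  have hSCne : ((Real.sqrt (2 * (1 - dotR n k ^ 2)) : ℝ) : ℂ) ≠ 0 := Complex.ofReal_ne_zero.mpr hSne
  have hS2 : Real.sqrt (2 * (1 - dotR n k ^ 2)) ^ 2 = 2 * (1 - dotR n k ^ 2) := Real.sq_sqrt (by linarith)
  have hdneg : dotR n (fun l => -k l) = -dotR n k := by
    simp [dotR, Fin.sum_univ_three]
  have hcrossneg : crossProduct (fun l => -k l) n = -(crossProduct k n) := by
    rw [show (fun l => -k l) = -k from rfl, map_neg, LinearMap.neg_apply]
  have hA : ∀ (k' : Fin 3 → ℝ) (a b : Fin 3), polTen2 n k' 2 a b =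
      ((Real.sqrt 2 : ℝ) : ℂ) * polVec n k' 1 a * polVec n k' 1 b := by
    intro k' a b; rw [polTen2]; norm_num
  have hB : ∀ (k' : Fin 3 → ℝ) (a b : Fin 3), polTen2 n k' (-2) a b =
      ((Real.sqrt 2 : ℝ) : ℂ) * polVec n k' (-1) a * polVec n k' (-1) b := by
    intro k' a b; rw [polTen2]; norm_num
  have hv1 : ∀ a : Fin 3, polVec n k 1 a =
      (((n a - dotR n k * k a : ℝ) : ℂ) +
        Complex.I * (((crossProduct k n) a : ℝ) : ℂ)) / ((Real.sqrt (2 * (1 - dotR n k ^ 2)) : ℝ) : ℂ) := by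
    intro a; simp only [polVec]; push_cast; ring
  have hv2 : ∀ a : Fin 3, polVec n k (-1) a =
      (((n a - dotR n k * k a : ℝ) : ℂ) -
        Complex.I * (((crossProduct k n) a : ℝ) : ℂ)) / ((Real.sqrt (2 * (1 - dotR n k ^ 2)) : ℝ) : ℂ) := by
    intro a; simp only [polVec]; push_cast; ring
  have hv3 : ∀ a : Fin 3, polVec n (fun l => -k l) 1 a =
      (((n a - dotR n k * k a : ℝ) : ℂ) -
        Complex.I * (((crossProduct k n) a : ℝ) : ℂ)) / ((Real.sqrt (2 * (1 - dotR n k ^ 2)) : ℝ) : ℂ) := by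
    intro a
    simp only [polVec, hdneg, hcrossneg, Pi.neg_apply, neg_sq]
    push_cast; ring
  have hv4 : ∀ a : Fin 3, polVec n (fun l => -k l) (-1) a =
      (((n a - dotR n k * k a : ℝ) : ℂ) +
        Complex.I * (((crossProduct k n) a : ℝ) : ℂ)) / ((Real.sqrt (2 * (1 - dotR n k ^ 2)) : ℝ) : ℂ) := by
    intro a
    simp only [polVec, hdneg, hcrossneg, Pi.neg_apply, neg_sq]
    push_cast; ring
  have hsq : ((Real.sqrt 2 : ℝ) : ℂ) * ((Real.sqrt 2 : ℝ) : ℂ) = 2 := by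
    rw [← Complex.ofReal_mul, Real.mul_self_sqrt (by norm_num)]; norm_num
  rw [hA, hA, hB, hB, hv1 i, hv1 j, hv2 i, hv2 j, hv3 m, hv3 m', hv4 m, hv4 m',
    expandAux _ _ _ _ _ _ hSCne, expandAux _ _ _ _ _ _ hSCne, hsq,
    ← add_div, ← mul_add,
    keyLemma (n i - dotR n k * k i) ((crossProduct k n) i)
      (n j - dotR n k * k j) ((crossProduct k n) j)
      (n m - dotR n k * k m) ((crossProduct k n) m)
      (n m' - dotR n k * k m') ((crossProduct k n) m')]
  have hbig : (2 : ℂ) * ((2 * (((n i - dotR n k * k i) * (n m - dotR n k * k m) + ((crossProduct k n) i) * ((crossProduct k n) m)) * ((n j - dotR n k * k j) * (n m' - dotR n k * k m') + ((crossProduct k n) j) * ((crossProduct k n) m')) - (((crossProduct k n) i) * (n m - dotR n k * k m) - (n i - dotR n k * k i) * ((crossProduct k n) m)) * (((crossProduct k n) j) * (n m' - dotR n k * k m') - (n j - dotR n k * k j) * ((crossProduct k n) m'))) : ℝ) : ℂ) / ((Real.sqrt (2 * (1 - dotR n k ^ 2)) : ℝ) : ℂ) ^ 4 =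
      ((2 * (2 * (((n i - dotR n k * k i) * (n m - dotR n k * k m) + ((crossProduct k n) i) * ((crossProduct k n) m)) * ((n j - dotR n k * k j) * (n m' - dotR n k * k m') + ((crossProduct k n) j) * ((crossProduct k n) m')) - (((crossProduct k n) i) * (n m - dotR n k * k m) - (n i - dotR n k * k i) * ((crossProduct k n) m)) * (((crossProduct k n) j) * (n m' - dotR n k * k m') - (n j - dotR n k * k j) * ((crossProduct k n) m')))) / Real.sqrt (2 * (1 - dotR n k ^ 2)) ^ 4 : ℝ) : ℂ) := by
    push_cast; ring
  rw [hbig, Complex.ofReal_inj, div_eq_iff (pow_ne_zero 4 hSne)]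
  have h1 := L1 n k hk' hn' i m
  have h2 := L1 n k hk' hn' j m'
  have h3 := L2a n k hk' hn' i m
  have h4 := L2a n k hk' hn' j m'
  have h5 := L2b k hk' i m j m'
  linear_combination
    (4 * ((n j - dotR n k * k j) * (n m' - dotR n k * k m') + ((crossProduct k n) j) * ((crossProduct k n) m'))) * h1 +
    (4 * (1 - dotR n k ^ 2) * projT k i m) * h2 -
    (4 * (((crossProduct k n) j) * (n m' - dotR n k * k m') - (n j - dotR n k * k j) * ((crossProduct k n) m'))) * h3 +
    (4 * (1 - dotR n k ^ 2) * epsK k i m) * h4 -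
    (4 * (1 - dotR n k ^ 2) ^ 2) * h5 -
    ((projT k i m * projT k j m' + projT k i m' * projT k j m -
      projT k i j * projT k m m') * (Real.sqrt (2 * (1 - dotR n k ^ 2)) ^ 2 + 2 * (1 - dotR n k ^ 2))) * hS2
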